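/- Let (𝓔ₙ⁰)_{n∈ℕ} satisfy hypotheses A₁ and A₃ with 𝓖(𝓔₀⁰) edgeless, let (Mₙ)_{n≥1} satisfy hypotheses B₁, B₂ and B₃, let Ψ = lim Ψₙ and K = ⋂ₙ Eₙ⁰. Then for every x ∈ M the following are equivalent: (i) the point Ψ(x) belongs to the orbit ⋃_{i∈ℤ} R^i(K); (ii) for every n large enough, Ψₙ(x) ∈ Eₙⁿ. -/

import Mathlib

open Set Function MeasureTheory Topology Filter

noncomputable section

variable {M : Type*}

section Defs
variable [TopologicalSpace M]

/-- A rectangle of `M`: a subset homeomorphic to the closed unit ball of `ℝ^d`. -/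
def IsRectangle (d : ℕ) (X : Set M) : Prop :=
  Nonempty (X ≃ₜ (Metric.closedBall (0 : EuclideanSpace ℝ (Fin d)) 1 :
    Set (EuclideanSpace ℝ (Fin d))))

/-- A collection of rectangles: a finite family of pairwise disjoint rectangles. -/
def IsRectCollection (d : ℕ) (𝓔 : Set (Set M)) : Prop :=
  𝓔.Finite ∧ (∀ X ∈ 𝓔, IsRectangle d X) ∧ 𝓔.Pairwise Disjoint

/-- The union `E` of the rectangles of a collection `𝓔`. -/
def collUnion (𝓔 : Set (Set M)) : Set M := ⋃₀ 𝓔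

/-- The collection `𝓔ⁿ = ⋃_{|k| ≤ n} R^k(𝓔)`. -/
def iterColl (R : M ≃ₜ M) (𝓔 : Set (Set M)) (n : ℕ) : Set (Set M) :=
  {Y | ∃ k : ℤ, |k| ≤ (n : ℤ) ∧ ∃ X ∈ 𝓔, Y = (R.toEquiv ^ k) '' X}

/-- `𝓔` is `p` times iterable. -/
def IterableColl (R : M ≃ₜ M) (𝓔 : Set (Set M)) (p : ℕ) : Prop :=
  ∀ X ∈ 𝓔, ∀ X' ∈ 𝓔, ∀ k l : ℤ, |k| ≤ (p : ℤ) → |l| ≤ (p : ℤ) →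
    Disjoint ((R.toEquiv ^ k) '' X) ((R.toEquiv ^ l) '' X') ∨
      (R.toEquiv ^ k) '' X = (R.toEquiv ^ l) '' X'

/-- The oriented graph `𝓖(𝓔)` (vertices the elements of `𝓔`, an edge from `X` to `R(X)`)
has no cycle. -/
def HasNoCycle (R : M ≃ₜ M) (𝓔 : Set (Set M)) : Prop :=
  ¬ ∃ (X : Set M) (p : ℕ), X ∈ 𝓔 ∧ 1 ≤ p ∧
      (∀ i : ℕ, i ≤ p → (R.toEquiv ^ (i : ℤ)) '' X ∈ 𝓔) ∧ (R.toEquiv ^ (p : ℤ)) '' X = X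

/-- The oriented graph `𝓖(𝓔)` has no edge. -/
def EdgelessGraph (R : M ≃ₜ M) (𝓔 : Set (Set M)) : Prop :=
  ∀ X ∈ 𝓔, (R : M → M) '' X ∉ 𝓔

/-- `𝓕` refines `𝓔`. -/
def Refines (𝓕 𝓔 : Set (Set M)) : Prop :=
  (∀ X ∈ 𝓔, ∃ Y ∈ 𝓕, Y ⊆ X) ∧
    ∀ X ∈ 𝓔, ∀ Y ∈ 𝓕, Disjoint X Y ∨ Y ⊆ interior X

/-- `𝓕` is compatible with `𝓔` for `p` iterates. -/
def CompatibleFor (R : M ≃ₜ M) (𝓕 𝓔 : Set (Set M)) (p : ℕ) : Prop :=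
  collUnion 𝓕 ⊆ collUnion 𝓔 ∧
    ∀ k : ℤ, |k| ≤ 2 * (p : ℤ) + 1 →
      (R.toEquiv ^ k) '' collUnion 𝓕 ∩ collUnion 𝓔 ⊆ collUnion 𝓕

/-- Hypothesis A₁. -/
def HypA1 (R : M ≃ₜ M) (𝓔 : ℕ → Set (Set M)) : Prop :=
  (∀ n, IterableColl R (𝓔 n) (n + 1) ∧ HasNoCycle R (iterColl R (𝓔 n) n)) ∧
  (∀ m n, m < n → Refines (iterColl R (𝓔 n) (n + 1)) (iterColl R (𝓔 m) (m + 1))) ∧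
  (∀ n, CompatibleFor R (𝓔 (n + 1)) (𝓔 n) (n + 1))

/-- Hypothesis A₂ (no isolated point). -/
def HypA2 (𝓔 : ℕ → Set (Set M)) : Prop :=
  ∀ n, ∀ X ∈ 𝓔 n, ∃ Y ∈ 𝓔 (n + 1), ∃ Z ∈ 𝓔 (n + 1), Y ≠ Z ∧ Y ⊆ X ∧ Z ⊆ X

/-- The set `K = ⋂ₙ Eₙ⁰`. -/
def limitK (𝓔 : ℕ → Set (Set M)) : Set M := ⋂ n, collUnion (𝓔 n)

/-- `Ψₙ = Mₙ ∘ ⋯ ∘ M₁`, `Ψ₀ = id`. -/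
def Psi (Mseq : ℕ → M ≃ₜ M) : ℕ → M ≃ₜ M
  | 0 => Homeomorph.refl M
  | n + 1 => (Psi Mseq n).trans (Mseq (n + 1))

/-- `gₙ = Ψₙ⁻¹ ∘ R ∘ Ψₙ`. -/
def gSeq (R : M ≃ₜ M) (Mseq : ℕ → M ≃ₜ M) (n : ℕ) : M ≃ₜ M :=
  ((Psi Mseq n).trans R).trans (Psi Mseq n).symm

/-- The support of a homeomorphism. -/
def homeoSupport (f : M ≃ₜ M) : Set M := closure {x | f x ≠ x}

/-- Hypothesis B₁ (support). -/
def HypB1 (R : M ≃ₜ M) (𝓔 : ℕ → Set (Set M)) (Mseq : ℕ → M ≃ₜ M) : Prop :=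
  ∀ n : ℕ, homeoSupport (Mseq (n + 1)) ⊆ collUnion (iterColl R (𝓔 n) n)

/-- Hypothesis B₂ (commutation). -/
def HypB2 (R : M ≃ₜ M) (𝓔 : ℕ → Set (Set M)) (Mseq : ℕ → M ≃ₜ M) : Prop :=
  ∀ n : ℕ, ∀ X ∈ iterColl R (𝓔 n) n, (R : M → M) '' X ∈ iterColl R (𝓔 n) n →
    ∀ x ∈ X, Mseq (n + 1) (R x) = R (Mseq (n + 1) x)

end Defs

section MetricDefs
variable [MetricSpace M]

/-- Hypothesis A₃ (decay of the collections of rectangles). -/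
def HypA3 (R : M ≃ₜ M) (𝓔 : ℕ → Set (Set M)) : Prop :=
  ∀ ε : ℝ, 0 < ε → ∃ N : ℕ, ∀ n ≥ N, ∀ X ∈ iterColl R (𝓔 n) n, Metric.diam X ≤ ε

/-- Hypothesis B₃ (convergence). -/
def HypB3 (R : M ≃ₜ M) (𝓔 : ℕ → Set (Set M)) (Mseq : ℕ → M ≃ₜ M) : Prop :=
  ∀ ε : ℝ, 0 < ε → ∃ N : ℕ, ∀ n ≥ N,
    ∀ X ∈ iterColl R (𝓔 (n + 1)) (n + 2) \ iterColl R (𝓔 (n + 1)) n,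
      Metric.diam ((Psi Mseq n) ⁻¹' X) ≤ ε

/-- Hypothesis B₄ (fibres are thin): the internal radius of `Ψₙ⁻¹(Eₙ⁰)` tends to `0`. -/
def HypB4 (𝓔 : ℕ → Set (Set M)) (Mseq : ℕ → M ≃ₜ M) : Prop :=
  ∀ ε : ℝ, 0 < ε → ∃ N : ℕ, ∀ n ≥ N, ∀ (x : M) (r : ℝ),
    Metric.ball x r ⊆ (Psi Mseq n) ⁻¹' collUnion (𝓔 n) → r ≤ ε

end MetricDefs

section TopDefs
variable [TopologicalSpace M]

/-- A Cantor set in `M`. -/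
def IsCantorSet (K : Set M) : Prop :=
  K.Nonempty ∧ IsCompact K ∧ Perfect K ∧ IsTotallyDisconnected K

/-- A totally disconnected compact set is tamely embedded if it admits arbitrarily small
neighbourhoods that are finite unions of pairwise disjoint rectangles. -/
def TamelyEmbedded (d : ℕ) (Q : Set M) : Prop :=
  ∀ U : Set M, IsOpen U → Q ⊆ U →
    ∃ 𝓑 : Set (Set M), IsRectCollection d 𝓑 ∧ Q ⊆ interior (collUnion 𝓑) ∧ collUnion 𝓑 ⊆ U

/-- A Cantor set is dynamically coherent for `R`. -/
def DynamicallyCoherent (R : M ≃ₜ M) (K : Set M) : Prop :=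
  (∀ k : ℤ, ∃ U : Set M, IsOpen U ∧ (R.toEquiv ^ k) '' K ∩ K = U ∩ K) ∧
  ∀ p : ℕ, ∀ x ∈ K,
    (∃ k : ℕ, 1 ≤ k ∧ ∀ i : ℕ, k ≤ i → i ≤ k + p → (R.toEquiv ^ (i : ℤ)) x ∉ K) ∧
    (∃ l : ℕ, 1 ≤ l ∧ ∀ i : ℕ, l ≤ i → i ≤ l + p → (R.toEquiv ^ (-(i : ℤ))) x ∉ K)

/-- A Cantor set is dynamically meagre for `R`: it has empty interior in
`Λ = Cl(⋃ᵢ Rⁱ(K))`. -/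
def DynamicallyMeagre (R : M ≃ₜ M) (K : Set M) : Prop :=
  ∀ U : Set M, IsOpen U → U ∩ closure (⋃ i : ℤ, (R.toEquiv ^ i) '' K) ⊆ K →
    U ∩ closure (⋃ i : ℤ, (R.toEquiv ^ i) '' K) = ∅

/-- `R` is minimal on the invariant set `Λ` (every orbit of a point of `Λ` is dense in `Λ`). -/
def MinimalOnSet (R : M ≃ₜ M) (Λ : Set M) : Prop :=
  ∀ x ∈ Λ, Λ ⊆ closure (Set.range fun n : ℤ => (R.toEquiv ^ n) x)

/-- `R` is transitive on the invariant set `Λ` (some orbit is dense in `Λ`). -/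
def TransitiveOnSet (R : M ≃ₜ M) (Λ : Set M) : Prop :=
  ∃ x ∈ Λ, Λ ⊆ closure (Set.range fun n : ℤ => (R.toEquiv ^ n) x)

end TopDefs

/-- The support of a measure. -/
def measSupport {M : Type*} [TopologicalSpace M] [MeasurableSpace M] (μ : Measure M) : Set M :=
  {x | ∀ U : Set M, IsOpen U → x ∈ U → 0 < μ U}

/-- The measurable dynamical system `S` restricted to the `S`-invariant set `A` is isomorphic
to the system `T` restricted to the `T`-invariant set `B`, in the sense of Béguin–Crovisier–Le
Roux: there are full invariant subsets `X₀ ⊆ A`, `Y₀ ⊆ B` and a bijective bimeasurable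
conjugacy between them. -/
def MeasIsoOn {X Y : Type*} [MeasurableSpace X] [MeasurableSpace Y]
    (S : X → X) (A : Set X) (T : Y → Y) (B : Set Y) : Prop :=
  ∃ (X₀ : Set X) (Y₀ : Set Y) (Θ : X → Y),
    X₀ ⊆ A ∧ Y₀ ⊆ B ∧ MeasurableSet X₀ ∧ MeasurableSet Y₀ ∧
    S '' X₀ = X₀ ∧ T '' Y₀ = Y₀ ∧
    (∀ μ : Measure X, IsProbabilityMeasure μ → Measure.map S μ = μ → μ A = 1 → μ X₀ = 1) ∧
    (∀ ν : Measure Y, IsProbabilityMeasure ν → Measure.map T ν = ν → ν B = 1 → ν Y₀ = 1) ∧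
    Set.BijOn Θ X₀ Y₀ ∧
    (∀ V : Set Y, MeasurableSet V → MeasurableSet (X₀ ∩ Θ ⁻¹' V)) ∧
    (∀ U : Set X, MeasurableSet U → MeasurableSet (Θ '' (X₀ ∩ U))) ∧
    (∀ x ∈ X₀, Θ (S x) = T (Θ x))



namespace BCL11

open Metric

/-! ### Integer powers of a homeomorphism, as homeomorphisms -/

section ZPowH

variable {α : Type*} [TopologicalSpace α]

/-- Natural powers of a homeomorphism. -/
def npowH (R : α ≃ₜ α) : ℕ → α ≃ₜ α
  | 0 => Homeomorph.refl α
  | n + 1 => (npowH R n).trans R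

lemma npowH_coe (R : α ≃ₜ α) (n : ℕ) (x : α) : npowH R n x = (R.toEquiv ^ n) x := by
  induction n with
  | zero => rfl
  | succ n ih =>
    have h : npowH R (n + 1) x = R (npowH R n x) := rfl
    rw [h, ih, pow_succ']
    rfl

lemma npowH_toEquiv (R : α ≃ₜ α) (n : ℕ) : (npowH R n).toEquiv = R.toEquiv ^ n :=
  Equiv.ext (npowH_coe R n)

/-- Integer powers of a homeomorphism. -/
def zpowH (R : α ≃ₜ α) : ℤ → α ≃ₜ α
  | Int.ofNat n => npowH R n
  | Int.negSucc n => (npowH R (n + 1)).symm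

lemma zpowH_toEquiv (R : α ≃ₜ α) (k : ℤ) : (zpowH R k).toEquiv = R.toEquiv ^ k := by
  cases k with
  | ofNat n => rw [Int.ofNat_eq_coe, zpow_natCast]; exact npowH_toEquiv R n
  | negSucc n =>
    rw [zpow_negSucc, ← npowH_toEquiv, Equiv.Perm.inv_def]
    rfl

lemma zpow_image_eq (R : α ≃ₜ α) (k : ℤ) (X : Set α) :
    (R.toEquiv ^ k) '' X = zpowH R k '' X := by
  rw [← zpowH_toEquiv]; rfl

lemma zpow_image_isCompact {R : α ≃ₜ α} {k : ℤ} {X : Set α} (h : IsCompact X) :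
    IsCompact ((R.toEquiv ^ k) '' X) := by
  rw [zpow_image_eq]; exact h.image (zpowH R k).continuous

lemma zpow_image_isPreconnected {R : α ≃ₜ α} {k : ℤ} {X : Set α} (h : IsPreconnected X) :
    IsPreconnected ((R.toEquiv ^ k) '' X) := by
  rw [zpow_image_eq]; exact h.image _ (zpowH R k).continuous.continuousOn

lemma zpow_image_nonempty {R : α ≃ₜ α} {k : ℤ} {X : Set α} (h : X.Nonempty) :
    ((R.toEquiv ^ k) '' X).Nonempty := by
  rw [zpow_image_eq]; exact h.image _

lemma zpow_image_interior (R : α ≃ₜ α) (k : ℤ) (X : Set α) :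
    (R.toEquiv ^ k) '' interior X = interior ((R.toEquiv ^ k) '' X) := by
  rw [zpow_image_eq, zpow_image_eq, Homeomorph.image_interior]

/-! ### Basic facts about `iterColl` -/

lemma iterColl_mono (R : α ≃ₜ α) (𝓔 : Set (Set α)) {p q : ℕ} (h : p ≤ q) :
    iterColl R 𝓔 p ⊆ iterColl R 𝓔 q := by
  rintro Y ⟨k, hk, X, hX, rfl⟩
  exact ⟨k, hk.trans (by exact_mod_cast h), X, hX, rfl⟩

lemma mem_iterColl_self {R : α ≃ₜ α} {𝓔 : Set (Set α)} {X : Set α} (h : X ∈ 𝓔) (p : ℕ) :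
    X ∈ iterColl R 𝓔 p :=
  ⟨0, by simp, X, h, by simp⟩

lemma iterColl_finite {R : α ≃ₜ α} {𝓔 : Set (Set α)} (h : 𝓔.Finite) (p : ℕ) :
    (iterColl R 𝓔 p).Finite := by
  have hsub : iterColl R 𝓔 p ⊆ (fun q : ℤ × Set α => (R.toEquiv ^ q.1) '' q.2) ''
      ((Set.Icc (-(p : ℤ)) p) ×ˢ 𝓔) := by
    rintro Y ⟨k, hk, X, hX, rfl⟩
    exact ⟨(k, X), ⟨Set.mem_Icc.mpr (abs_le.mp hk), hX⟩, rfl⟩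
  exact (((Set.finite_Icc _ _).prod h).image _).subset hsub

end ZPowH

/-! ### Rectangles -/

section Rect

variable {α : Type*} [MetricSpace α] {d : ℕ}

lemma IsRectangle.isCompact' {Z : Set α} (h : IsRectangle d Z) : IsCompact Z := by
  obtain ⟨e⟩ := h
  haveI : CompactSpace (Metric.closedBall (0 : EuclideanSpace ℝ (Fin d)) 1) :=
    isCompact_iff_compactSpace.mp (isCompact_closedBall _ _)
  haveI := e.symm.compactSpace
  exact isCompact_iff_compactSpace.mpr ‹_›

lemma IsRectangle.nonempty' {Z : Set α} (h : IsRectangle d Z) : Z.Nonempty := by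
  obtain ⟨e⟩ := h
  have hne : Nonempty (Metric.closedBall (0 : EuclideanSpace ℝ (Fin d)) 1) :=
    ⟨⟨0, Metric.mem_closedBall_self zero_le_one⟩⟩
  exact Set.nonempty_coe_sort.mp ⟨e.symm hne.some⟩

lemma IsRectangle.isPreconnected' {Z : Set α} (h : IsRectangle d Z) : IsPreconnected Z := by
  obtain ⟨e⟩ := h
  haveI : PreconnectedSpace (Metric.closedBall (0 : EuclideanSpace ℝ (Fin d)) 1) :=
    Subtype.preconnectedSpace ((convex_closedBall _ _).isPreconnected)
  have h1 : IsPreconnected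
      (Set.univ : Set (Metric.closedBall (0 : EuclideanSpace ℝ (Fin d)) 1)) :=
    isPreconnected_univ
  have h2 := h1.image (fun b => (e.symm b : α))
    (continuous_subtype_val.comp e.symm.continuous).continuousOn
  have himg : (fun b => (e.symm b : α)) '' Set.univ = Z := by
    apply Set.eq_of_subset_of_subset
    · rintro _ ⟨b, -, rfl⟩; exact (e.symm b).2
    · intro z hz
      exact ⟨e ⟨z, hz⟩, trivial, by simp⟩
  rwa [himg] at h2

lemma iterColl_elem_props {R : α ≃ₜ α} {𝓔 : Set (Set α)}
    (hrect : ∀ X ∈ 𝓔, IsRectangle d X) {p : ℕ} {Y : Set α} (hY : Y ∈ iterColl R 𝓔 p) :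
    IsCompact Y ∧ IsPreconnected Y ∧ Y.Nonempty := by
  obtain ⟨k, hk, X, hX, rfl⟩ := hY
  have h := hrect X hX
  exact ⟨zpow_image_isCompact (IsRectangle.isCompact' h),
    zpow_image_isPreconnected (IsRectangle.isPreconnected' h),
    zpow_image_nonempty (IsRectangle.nonempty' h)⟩

lemma collUnion_isClosed {𝓕 : Set (Set α)} (hfin : 𝓕.Finite)
    (h : ∀ X ∈ 𝓕, IsClosed X) : IsClosed (collUnion 𝓕) := by
  rw [collUnion, Set.sUnion_eq_biUnion]
  exact hfin.isClosed_biUnion h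

end Rect

/-! ### Support of a homeomorphism -/

section Support

variable {α : Type*} [TopologicalSpace α]

lemma eq_self_of_not_mem {f : α ≃ₜ α} {S : Set α} (hs : homeoSupport f ⊆ S) {x : α}
    (hx : x ∉ S) : f x = x := by
  by_contra h
  exact hx (hs (subset_closure h))

lemma mem_iff_of_support {f : α ≃ₜ α} {S : Set α} (hs : homeoSupport f ⊆ S) (x : α) :
    f x ∈ S ↔ x ∈ S := by
  constructor
  · intro h
    by_contra hx
    rw [eq_self_of_not_mem hs hx] at h
    exact hx h
  · intro h
    by_contra hfx
    have h2 : f (f x) = f x := eq_self_of_not_mem hs hfx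
    have h3 : f x = x := f.injective h2
    rw [h3] at hfx
    exact hfx h

lemma homeoSupport_symm (f : α ≃ₜ α) : homeoSupport f.symm = homeoSupport f := by
  have hset : {x : α | f.symm x ≠ x} = {x : α | f x ≠ x} := by
    ext x
    simp only [Set.mem_setOf_eq, ne_eq, not_iff_not]
    constructor
    · intro h; nth_rewrite 1 [← h]; exact f.apply_symm_apply x
    · intro h; nth_rewrite 1 [← h]; exact f.symm_apply_apply x
  unfold homeoSupport
  rw [hset]

end Support

/-! ### A preconnected set inside a finite disjoint union of compacta -/

section Preconn

variable {α : Type*} [MetricSpace α]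

lemma preconnected_subset_mem {C : Set α} (hC : IsPreconnected C) (hne : C.Nonempty)
    {𝓕 : Set (Set α)} (hfin : 𝓕.Finite) (hcpt : ∀ W ∈ 𝓕, IsCompact W)
    (hdis : ∀ W ∈ 𝓕, ∀ W' ∈ 𝓕, Disjoint W W' ∨ W = W')
    (hsub : C ⊆ collUnion 𝓕) : ∃ W ∈ 𝓕, C ⊆ W := by
  obtain ⟨c, hc⟩ := hne
  obtain ⟨W, hW, hcW⟩ := hsub hc
  refine ⟨W, hW, ?_⟩
  set B := ⋃₀ {W' ∈ 𝓕 | W' ≠ W} with hB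
  have hBc : IsCompact B := by
    rw [hB, Set.sUnion_eq_biUnion]
    exact (hfin.subset (Set.sep_subset _ _)).isCompact_biUnion fun W' hW' => hcpt W' hW'.1
  have hdWB : Disjoint W B := by
    rw [hB, Set.disjoint_sUnion_right]
    intro W' hW'
    rcases hdis W hW W' hW'.1 with h | h
    · exact h
    · exact absurd h.symm hW'.2
  obtain ⟨U, V, hU, hV, hWU, hBV, hUV⟩ :=
    SeparatedNhds.of_isCompact_isCompact (hcpt W hW) hBc hdWB
  have hCUV : C ⊆ U ∪ V := by
    intro z hz
    obtain ⟨W', hW', hzW'⟩ := hsub hz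
    by_cases h : W' = W
    · exact Or.inl (hWU (h ▸ hzW'))
    · exact Or.inr (hBV ⟨W', ⟨hW', h⟩, hzW'⟩)
  have hCU : C ⊆ U :=
    IsPreconnected.subset_left_of_subset_union hU hV hUV hCUV ⟨c, hc, hWU hcW⟩ hC
  intro z hz
  obtain ⟨W', hW', hzW'⟩ := hsub hz
  by_cases h : W' = W
  · exact h ▸ hzW'
  · exact absurd (hBV ⟨W', ⟨hW', h⟩, hzW'⟩)
      fun hzV => Set.disjoint_left.mp hUV (hCU hz) hzV

end Preconn

/-! ### No nonempty compact open subset of a positive-dimensional Euclidean space -/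

lemma euclidean_no_compact_open {d : ℕ} (hd : d ≠ 0) {S : Set (EuclideanSpace ℝ (Fin d))}
    (hne : S.Nonempty) (hcpt : IsCompact S) (ho : IsOpen S) : False := by
  haveI : Nontrivial (EuclideanSpace ℝ (Fin d)) := by
    refine ⟨0, EuclideanSpace.single ⟨0, Nat.pos_of_ne_zero hd⟩ (1 : ℝ), fun h => ?_⟩
    have h1 : ‖EuclideanSpace.single (⟨0, Nat.pos_of_ne_zero hd⟩ : Fin d) (1 : ℝ)‖ = 1 := by
      rw [EuclideanSpace.norm_single]; simp
    rw [← h] at h1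
    simp at h1
  haveI : PreconnectedSpace (EuclideanSpace ℝ (Fin d)) :=
    ⟨(convex_univ (𝕜 := ℝ) (E := EuclideanSpace ℝ (Fin d))).isPreconnected⟩
  have hclopen : IsClopen S := ⟨hcpt.isClosed, ho⟩
  have huniv : S = Set.univ := hclopen.eq_univ hne
  rw [huniv] at hcpt
  exact noncompact_univ _ hcpt

/-! ### A homeomorphism supported in a disjoint finite union of rectangles preserves
the rectangles (under a frontier condition) -/

section Fix

variable {α : Type*} [MetricSpace α]

lemma image_subset_self_of_support {g : α ≃ₜ α} {𝓕 : Set (Set α)} (hfin : 𝓕.Finite)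
    (hcpt : ∀ W ∈ 𝓕, IsCompact W) (hconn : ∀ W ∈ 𝓕, IsPreconnected W)
    (hne : ∀ W ∈ 𝓕, W.Nonempty)
    (hdis : ∀ W ∈ 𝓕, ∀ W' ∈ 𝓕, Disjoint W W' ∨ W = W')
    (hsupp : homeoSupport g ⊆ collUnion 𝓕)
    {Y : Set α} (hY : Y ∈ 𝓕) (hfr : (frontier Y).Nonempty) :
    g '' Y ⊆ Y := by
  have hsub : g '' Y ⊆ collUnion 𝓕 := by
    rintro _ ⟨y, hy, rfl⟩
    exact (mem_iff_of_support hsupp y).mpr ⟨Y, hY, hy⟩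
  have hgY : IsPreconnected (g '' Y) :=
    (hconn Y hY).image g g.continuous.continuousOn
  have hgYne : (g '' Y).Nonempty := (hne Y hY).image g
  obtain ⟨W, hW, hgYW⟩ := preconnected_subset_mem hgY hgYne hfin hcpt hdis hsub
  obtain ⟨a, ha⟩ := hfr
  have haY : a ∈ Y := by
    have h := ha.1
    rwa [(hcpt Y hY).isClosed.closure_eq] at h
  have haC : a ∈ closure (collUnion 𝓕)ᶜ := by
    rw [_root_.mem_closure_iff]
    intro O hO haO
    set B := ⋃₀ {W' ∈ 𝓕 | W' ≠ Y} with hB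
    have hBclosed : IsClosed B := by
      rw [hB, Set.sUnion_eq_biUnion]
      exact (hfin.subset (Set.sep_subset _ _)).isClosed_biUnion
        fun W' hW' => (hcpt W' hW'.1).isClosed
    have haB' : a ∉ B := by
      rintro ⟨W', hW', ha'⟩
      rcases hdis W' hW'.1 Y hY with h | h
      · exact Set.disjoint_left.mp h ha' haY
      · exact hW'.2 h
    have ha2 : a ∈ closure Yᶜ := by
      rw [frontier_eq_closure_inter_closure] at ha
      exact ha.2
    rw [_root_.mem_closure_iff] at ha2
    obtain ⟨z, ⟨⟨hzO, hzB⟩, hzY⟩⟩ :=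
      ha2 (O ∩ Bᶜ) (hO.inter hBclosed.isOpen_compl) ⟨haO, haB'⟩
    refine ⟨z, hzO, fun hzE => ?_⟩
    obtain ⟨W', hW', hzW'⟩ := hzE
    by_cases h : W' = Y
    · exact hzY (h ▸ hzW')
    · exact hzB ⟨W', ⟨hW', h⟩, hzW'⟩
  have hfixa : g a = a := by
    have hclosed : IsClosed {x : α | g x = x} := isClosed_eq g.continuous continuous_id
    have hsub2 : (collUnion 𝓕)ᶜ ⊆ {x : α | g x = x} :=
      fun x hx => eq_self_of_not_mem hsupp hx
    exact closure_minimal hsub2 hclosed haC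
  have haW : a ∈ W := hgYW ⟨a, haY, hfixa⟩
  rcases hdis W hW Y hY with h | h
  · exact absurd haY (Set.disjoint_left.mp h haW)
  · exact h ▸ hgYW

variable {d : ℕ}

lemma exists_fix_index [CompactSpace α] [ChartedSpace (EuclideanSpace ℝ (Fin d)) α]
    (hd : d ≠ 0) (R : α ≃ₜ α) (𝓔 : ℕ → Set (Set α)) (hrect : ∀ n, IsRectCollection d (𝓔 n))
    (hA1 : HypA1 R 𝓔) (hA3 : HypA3 R 𝓔) (Mseq : ℕ → α ≃ₜ α) (hB1 : HypB1 R 𝓔 Mseq) :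
    ∃ N₀ : ℕ, ∀ s ≥ N₀, ∀ Y ∈ iterColl R (𝓔 s) s, (Mseq (s + 1)) '' Y = Y := by
  obtain ⟨δ, hδ, hLeb⟩ := lebesgue_number_lemma_of_metric (isCompact_univ (X := α))
      (fun x : α => (chartAt (EuclideanSpace ℝ (Fin d)) x).open_source)
      (fun x _ => Set.mem_iUnion.mpr ⟨x, mem_chart_source _ x⟩)
  obtain ⟨N₀, hN₀⟩ := hA3 (δ / 2) (by positivity)
  refine ⟨N₀, fun s hs Y hY => ?_⟩
  have hfin : (iterColl R (𝓔 s) s).Finite := iterColl_finite (hrect s).1 s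
  have hprops : ∀ W ∈ iterColl R (𝓔 s) s, IsCompact W ∧ IsPreconnected W ∧ W.Nonempty :=
    fun W hW => iterColl_elem_props (hrect s).2.1 hW
  have hcpt : ∀ W ∈ iterColl R (𝓔 s) s, IsCompact W := fun W hW => (hprops W hW).1
  have hconn : ∀ W ∈ iterColl R (𝓔 s) s, IsPreconnected W := fun W hW => (hprops W hW).2.1
  have hne : ∀ W ∈ iterColl R (𝓔 s) s, W.Nonempty := fun W hW => (hprops W hW).2.2
  have hdis : ∀ W ∈ iterColl R (𝓔 s) s, ∀ W' ∈ iterColl R (𝓔 s) s,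
      Disjoint W W' ∨ W = W' := by
    rintro W ⟨k, hk, X, hX, rfl⟩ W' ⟨l, hl, X', hX', rfl⟩
    exact (hA1.1 s).1 X hX X' hX' k l (hk.trans (by push_cast; omega))
      (hl.trans (by push_cast; omega))
  have hfr : (frontier Y).Nonempty := by
    by_contra hfr
    rw [Set.not_nonempty_iff_eq_empty] at hfr
    have hYc : IsClosed Y := (hcpt Y hY).isClosed
    have hYo : IsOpen Y := by
      have hsub3 : Y ⊆ interior Y := by
        intro y hy
        by_contra hy'
        exact (Set.eq_empty_iff_forall_notMem.mp hfr y) ⟨subset_closure hy, hy'⟩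
      rw [Set.Subset.antisymm hsub3 interior_subset]
      exact isOpen_interior
    obtain ⟨y₀, hy₀⟩ := hne Y hY
    obtain ⟨x, hx⟩ := hLeb y₀ trivial
    have hYsub : Y ⊆ (chartAt (EuclideanSpace ℝ (Fin d)) x).source := by
      intro z hz
      apply hx
      have hb : dist z y₀ ≤ δ / 2 :=
        le_trans (Metric.dist_le_diam_of_mem (hcpt Y hY).isBounded hz hy₀) (hN₀ s hs Y hY)
      exact Metric.mem_ball.mpr (lt_of_le_of_lt hb (by linarith))
    set e := chartAt (EuclideanSpace ℝ (Fin d)) x with he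
    have hSo : IsOpen (e '' Y) := e.isOpen_image_of_subset_source hYo hYsub
    have hScpt : IsCompact (e '' Y) := (hcpt Y hY).image_of_continuousOn
      (e.continuousOn.mono hYsub)
    have hSne : (e '' Y).Nonempty := (hne Y hY).image e
    exact euclidean_no_compact_open hd hSne hScpt hSo
  have h1 : Mseq (s + 1) '' Y ⊆ Y :=
    image_subset_self_of_support hfin hcpt hconn hne hdis (hB1 s) hY hfr
  have h2 : (Mseq (s + 1)).symm '' Y ⊆ Y :=
    image_subset_self_of_support hfin hcpt hconn hne hdis
      (by rw [homeoSupport_symm]; exact hB1 s) hY hfr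
  apply Set.Subset.antisymm h1
  intro y hy
  exact ⟨(Mseq (s + 1)).symm y, h2 ⟨y, hy, rfl⟩, (Mseq (s + 1)).apply_symm_apply y⟩

end Fix

/-! ### Tracking points through the sequence of homeomorphisms -/

section Track

variable {α : Type*} [MetricSpace α]

lemma dichotomy {R : α ≃ₜ α} {𝓔 : ℕ → Set (Set α)} (hA1 : HypA1 R 𝓔) {n m : ℕ}
    (hnm : n ≤ m) {X Y : Set α} (hX : X ∈ iterColl R (𝓔 n) n)
    (hY : Y ∈ iterColl R (𝓔 m) m) : Disjoint X Y ∨ Y ⊆ X := by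
  rcases lt_or_eq_of_le hnm with h | h
  · have href := (hA1.2.1 n m h).2 X (iterColl_mono R (𝓔 n) (Nat.le_succ n) hX)
      Y (iterColl_mono R (𝓔 m) (Nat.le_succ m) hY)
    exact href.imp id fun h2 => h2.trans interior_subset
  · subst h
    obtain ⟨k, hk, Z, hZ, rfl⟩ := hX
    obtain ⟨l, hl, Z', hZ', rfl⟩ := hY
    have h2 := (hA1.1 n).1 Z hZ Z' hZ' k l (hk.trans (by push_cast; omega))
      (hl.trans (by push_cast; omega))
    exact h2.imp id fun h3 => h3.symm.subset

lemma psi_mem_rect_iff {R : α ≃ₜ α} {𝓔 : ℕ → Set (Set α)} {Mseq : ℕ → α ≃ₜ α}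
    (hA1 : HypA1 R 𝓔) (hB1 : HypB1 R 𝓔 Mseq) {N₀ : ℕ}
    (hfix : ∀ s ≥ N₀, ∀ Y ∈ iterColl R (𝓔 s) s, Mseq (s + 1) '' Y = Y)
    {n : ℕ} (hn : N₀ ≤ n) {X : Set α} (hX : X ∈ iterColl R (𝓔 n) n) (x : α) :
    ∀ m, n ≤ m → (Psi Mseq m x ∈ X ↔ Psi Mseq n x ∈ X) := by
  intro m hm
  induction m, hm using Nat.le_induction with
  | base => exact Iff.rfl
  | succ m hm ih =>
    have hstep : Psi Mseq (m + 1) x = Mseq (m + 1) (Psi Mseq m x) := rfl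
    rw [← ih]
    by_cases hp : Psi Mseq m x ∈ collUnion (iterColl R (𝓔 m) m)
    · obtain ⟨Y, hYmem, hpY⟩ := hp
      have hq : Psi Mseq (m + 1) x ∈ Y := by
        rw [hstep, ← hfix m (hn.trans hm) Y hYmem]
        exact Set.mem_image_of_mem _ hpY
      rcases dichotomy hA1 hm hX hYmem with h | h
      · exact iff_of_false (fun hmem => Set.disjoint_left.mp h hmem hq)
          fun hmem => Set.disjoint_left.mp h hmem hpY
      · exact iff_of_true (h hq) (h hpY)
    · have hfixp : Psi Mseq (m + 1) x = Psi Mseq m x := by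
        rw [hstep]
        exact eq_self_of_not_mem (hB1 m) hp
      rw [hfixp]

lemma mem_orbit_of_forall {R : α ≃ₜ α} {𝓔 : ℕ → Set (Set α)} (hA1 : HypA1 R 𝓔)
    {a : α} {N₁ : ℕ} (ha : ∀ m ≥ N₁, a ∈ collUnion (iterColl R (𝓔 m) m)) :
    a ∈ ⋃ i : ℤ, (R.toEquiv ^ i) '' limitK 𝓔 := by
  obtain ⟨X, hXmem, haX⟩ := ha N₁ le_rfl
  obtain ⟨k, hk, Z, hZ, rfl⟩ := hXmem
  obtain ⟨z, hzZ, hza⟩ := haX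
  have hz' : ∀ t, N₁ ≤ t → z ∈ collUnion (𝓔 t) := by
    intro t ht
    induction t, ht using Nat.le_induction with
    | base => exact ⟨Z, hZ, hzZ⟩
    | succ t ht ih =>
      obtain ⟨X', hXmem', haX'⟩ := ha (t + 1) (by omega)
      obtain ⟨l, hl, W, hW, rfl⟩ := hXmem'
      obtain ⟨w, hwW, hwa⟩ := haX'
      have hzw : z = (R.toEquiv ^ (l - k)) w := by
        have heq : (R.toEquiv ^ k) z = (R.toEquiv ^ l) w := hza.trans hwa.symm
        have h0 : (R.toEquiv ^ (-k)) ((R.toEquiv ^ k) z) = z := by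
          rw [← Equiv.Perm.mul_apply, ← zpow_add]
          simp
        have h1 : (R.toEquiv ^ (-k)) ((R.toEquiv ^ l) w) = (R.toEquiv ^ (l - k)) w := by
          rw [← Equiv.Perm.mul_apply, ← zpow_add]
          have : -k + l = l - k := by ring
          rw [this]
        rw [← h0, heq, h1]
      have hbound : |l - k| ≤ 2 * (((t : ℤ)) + 1) + 1 := by
        have h1 : |l - k| ≤ |l| + |k| := by
          calc |l - k| = |l + -k| := by ring_nf
            _ ≤ |l| + |-k| := abs_add_le _ _
            _ = |l| + |k| := by rw [abs_neg]
        have h2 : (N₁ : ℤ) ≤ (t : ℤ) := by exact_mod_cast ht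
        have hl' : |l| ≤ (t : ℤ) + 1 := by exact_mod_cast hl
        have hk' : |k| ≤ (N₁ : ℤ) := hk
        linarith
      have hcompat := (hA1.2.2 t).2 (l - k) (by push_cast; exact hbound)
      apply hcompat
      constructor
      · rw [hzw]
        exact Set.mem_image_of_mem _ ⟨W, hW, hwW⟩
      · exact ih
  have hmono : ∀ u v : ℕ, u ≤ v → collUnion (𝓔 v) ⊆ collUnion (𝓔 u) := by
    intro u v huv
    induction v, huv using Nat.le_induction with
    | base => exact subset_rfl
    | succ v _ ih => exact ((hA1.2.2 v).1).trans ih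
  have hzK : z ∈ limitK 𝓔 := by
    rw [limitK, Set.mem_iInter]
    intro t
    rcases le_or_gt N₁ t with h | h
    · exact hz' t h
    · exact hmono t N₁ h.le (hz' N₁ le_rfl)
  exact Set.mem_iUnion.mpr ⟨k, z, hzK, hza⟩

end Track

/-! ### The zero-dimensional case -/

section DimZero

variable {α : Type*} [MetricSpace α]

lemma singleton_isOpen_of_d0 [ChartedSpace (EuclideanSpace ℝ (Fin 0)) α] (z : α) :
    IsOpen ({z} : Set α) := by
  have hsub : ∀ u v : EuclideanSpace ℝ (Fin 0), u = v := fun u v =>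
    (EuclideanSpace.equiv (Fin 0) ℝ).injective (Subsingleton.elim _ _)
  set e := chartAt (EuclideanSpace ℝ (Fin 0)) z with he
  have hsrc : e.source = {z} := by
    apply Set.eq_of_subset_of_subset
    · intro w hw
      exact Set.mem_singleton_iff.mpr (e.injOn hw (mem_chart_source _ z) (hsub _ _))
    · intro w hw
      rw [Set.mem_singleton_iff] at hw
      rw [hw]
      exact mem_chart_source _ z
  rw [← hsrc]
  exact e.open_source

lemma colls_empty_of_finite [CompactSpace α] [DiscreteTopology α] {R : α ≃ₜ α}
    {𝓔 : ℕ → Set (Set α)} (hA1 : HypA1 R 𝓔) (m : ℕ) : 𝓔 m = ∅ := by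
  haveI : Finite α := finite_of_compact_of_discrete
  by_contra hm
  obtain ⟨Z₀, hZ₀⟩ := Set.nonempty_iff_ne_empty.mpr hm
  set p := orderOf R.toEquiv with hp
  have hppos : 0 < p := orderOf_pos _
  set n := max (m + 1) p with hn
  obtain ⟨Y, hY, -⟩ := (hA1.2.1 m n (by omega)).1 Z₀ (mem_iterColl_self hZ₀ (m + 1))
  obtain ⟨k, hk, Z, hZ, -⟩ := hY
  refine (hA1.1 n).2 ⟨Z, p, mem_iterColl_self hZ n, hppos, ?_, ?_⟩
  · intro i hi
    refine ⟨(i : ℤ), ?_, Z, hZ, rfl⟩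
    have h1 : i ≤ n := le_trans hi (le_max_right _ _)
    rw [abs_of_nonneg (by exact_mod_cast Nat.zero_le i : (0 : ℤ) ≤ (i : ℤ))]
    exact_mod_cast h1
  · rw [zpow_natCast, hp, pow_orderOf_eq_one]
    simp

end DimZero

end BCL11

/-- A point `Ψ(x)` belongs to the orbit of `K` if and only if, for every
`n` large enough, `Ψₙ(x)` belongs to `Eₙⁿ`. -/
theorem mem_orbit_limitK_iff (d : ℕ) (M : Type*) [MetricSpace M] [CompactSpace M]
    [ChartedSpace (EuclideanSpace ℝ (Fin d)) M]
    (R : M ≃ₜ M) (𝓔 : ℕ → Set (Set M)) (hrect : ∀ n, IsRectCollection d (𝓔 n))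
    (hA1 : HypA1 R 𝓔) (hA3 : HypA3 R 𝓔) (hEdge : EdgelessGraph R (𝓔 0))
    (Mseq : ℕ → M ≃ₜ M)
    (hB1 : HypB1 R 𝓔 Mseq) (hB2 : HypB2 R 𝓔 Mseq) (hB3 : HypB3 R 𝓔 Mseq)
    (Ψ : M → M) (hΨc : Continuous Ψ)
    (hΨ : TendstoUniformly (fun n => ⇑(Psi Mseq n)) Ψ Filter.atTop) :
    ∀ x : M, Ψ x ∈ (⋃ i : ℤ, (R.toEquiv ^ i) '' limitK 𝓔) ↔
      ∃ N : ℕ, ∀ n ≥ N, Psi Mseq n x ∈ collUnion (iterColl R (𝓔 n) n) := by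
  intro x
  rcases Nat.eq_zero_or_pos d with hd | hdpos
  · subst hd
    haveI : DiscreteTopology M :=
      discreteTopology_iff_isOpen_singleton.mpr fun z => BCL11.singleton_isOpen_of_d0 z
    have hempty : ∀ m, 𝓔 m = ∅ := BCL11.colls_empty_of_finite hA1
    constructor
    · intro hx
      exfalso
      obtain ⟨i, hi⟩ := Set.mem_iUnion.mp hx
      obtain ⟨y, hyK, -⟩ := hi
      have h0 := Set.mem_iInter.mp hyK 0
      rw [hempty 0] at h0
      simp [collUnion] at h0
    · rintro ⟨N, hN⟩
      exfalso
      have h0 := hN N le_rfl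
      obtain ⟨X, hX, -⟩ := h0
      obtain ⟨k, -, Z, hZ, -⟩ := hX
      rw [hempty N] at hZ
      exact absurd hZ (Set.notMem_empty Z)
  · have hd0 : d ≠ 0 := hdpos.ne'
    obtain ⟨N₀, hfix⟩ := BCL11.exists_fix_index hd0 R 𝓔 hrect hA1 hA3 Mseq hB1
    constructor
    · intro hx
      obtain ⟨i, hi⟩ := Set.mem_iUnion.mp hx
      obtain ⟨y, hyK, hyx⟩ := hi
      refine ⟨max N₀ i.natAbs, fun n hn => ?_⟩
      have hN₀n : N₀ ≤ n := le_trans (le_max_left _ _) hn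
      have hin : |i| ≤ (n : ℤ) := by
        have h1 : i.natAbs ≤ n := le_trans (le_max_right _ _) hn
        rw [Int.abs_eq_natAbs]
        exact_mod_cast h1
      obtain ⟨Zn, hZn, hyZn⟩ := Set.mem_iInter.mp hyK n
      obtain ⟨Zn1, hZn1, hyZn1⟩ := Set.mem_iInter.mp hyK (n + 1)
      have hint : y ∈ interior Zn := by
        rcases (hA1.2.1 n (n + 1) (Nat.lt_succ_self n)).2 Zn
            (BCL11.mem_iterColl_self hZn (n + 1)) Zn1 (BCL11.mem_iterColl_self hZn1 (n + 2))
          with h | h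
        · exact absurd hyZn1 (Set.disjoint_left.mp h hyZn)
        · exact h hyZn1
      have hXmem : (R.toEquiv ^ i) '' Zn ∈ iterColl R (𝓔 n) n := ⟨i, hin, Zn, hZn, rfl⟩
      have haint : Ψ x ∈ interior ((R.toEquiv ^ i) '' Zn) := by
        rw [← BCL11.zpow_image_interior]
        exact ⟨y, hint, hyx⟩
      have hev : ∀ᶠ m in Filter.atTop, Psi Mseq m x ∈ interior ((R.toEquiv ^ i) '' Zn) :=
        (hΨ.tendsto_at x).eventually_mem (isOpen_interior.mem_nhds haint)
      obtain ⟨m, hm1, hm2⟩ := (hev.and (Filter.eventually_ge_atTop n)).exists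
      exact ⟨(R.toEquiv ^ i) '' Zn, hXmem,
        (BCL11.psi_mem_rect_iff hA1 hB1 hfix hN₀n hXmem x m hm2).mp (interior_subset hm1)⟩
    · rintro ⟨N, hN⟩
      apply BCL11.mem_orbit_of_forall hA1 (N₁ := max N N₀)
      intro m hm
      obtain ⟨X, hXmem, hmem⟩ := hN m (le_trans (le_max_left _ _) hm)
      have hXcl : IsClosed X := (BCL11.iterColl_elem_props (hrect m).2.1 hXmem).1.isClosed
      have hall : ∀ᶠ t in Filter.atTop, Psi Mseq t x ∈ X := by
        rw [Filter.eventually_atTop]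
        exact ⟨m, fun t ht => (BCL11.psi_mem_rect_iff hA1 hB1 hfix
          (le_trans (le_max_right _ _) hm) hXmem x t ht).mpr hmem⟩
      exact ⟨X, hXmem, hXcl.mem_of_tendsto (hΨ.tendsto_at x) hall⟩

end
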